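/- arXiv:2007.00085 — 2 statements merged into one kernel-verified Lean document; each statement's English description precedes it below -/
import Mathlib

section
/- If a belief support b is winning for a reach-avoid specification, then every nonempty subset b' ⊆ b is also winning. -/
open scoped ENNReal Classical

/-- A POMDP: transition function `P` and observation function `obs`. -/
structure POMDP (S Act Ω : Type) where
  P : S → Act → PMF S
  obs : S → Ω

namespace POMDP

variable {S Act Ω : Type}

/-- A history-dependent observation-based policy: maps the observation-action
history and the current observation to a distribution over actions. -/
def Policy (Act Ω : Type) := List (Ω × Act) → Ω → PMF Act

/-- Probability to reach `T` within `n` steps, starting in state `s` with history `h`. -/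
noncomputable def reachN (M : POMDP S Act Ω) (σ : Policy Act Ω) (T : Set S) :
    ℕ → List (Ω × Act) → S → ℝ≥0∞
  | 0, _, s => if s ∈ T then 1 else 0
  | n + 1, h, s =>
    if s ∈ T then 1
    else ∑' α : Act, σ h (M.obs s) α *
      ∑' s' : S, M.P s α s' * M.reachN σ T n (h ++ [(M.obs s, α)]) s'

/-- Probability to eventually reach `T` from initial belief `b` under policy `σ`. -/
noncomputable def prReach (M : POMDP S Act Ω) (σ : Policy Act Ω) (T : Set S)
    (b : PMF S) : ℝ≥0∞ :=
  ⨆ n, ∑' s : S, b s * M.reachN σ T n [] s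

/-- A policy is winning from belief `b`: AVOID reached with probability 0,
REACH reached with probability 1. -/
def WinningPolicyFrom (M : POMDP S Act Ω) (REACH AVOID : Set S)
    (σ : Policy Act Ω) (b : PMF S) : Prop :=
  M.prReach σ AVOID b = 0 ∧ M.prReach σ REACH b = 1

/-- A belief is winning if some winning policy exists from it. -/
def WinningBelief (M : POMDP S Act Ω) (REACH AVOID : Set S) (b : PMF S) : Prop :=
  ∃ σ, M.WinningPolicyFrom REACH AVOID σ b

/-- A set of states is absorbing. -/
def Absorbing (M : POMDP S Act Ω) (T : Set S) : Prop :=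
  ∀ s ∈ T, ∀ α, M.P s α = PMF.pure s

/-- A belief support: a nonempty set of states sharing a common observation. -/
def IsBeliefSupport (M : POMDP S Act Ω) (b : Set S) : Prop :=
  b.Nonempty ∧ ∀ s ∈ b, ∀ s' ∈ b, M.obs s = M.obs s'

/-- A policy is winning from a belief support `b` if it is winning from every
belief whose support is `b`. -/
def WinningFromSupport (M : POMDP S Act Ω) (REACH AVOID : Set S)
    (σ : Policy Act Ω) (b : Set S) : Prop :=
  ∀ β : PMF S, β.support = b → M.WinningPolicyFrom REACH AVOID σ β

/-- A belief support is winning if some policy is winning from it. -/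
def WinningSupport (M : POMDP S Act Ω) (REACH AVOID : Set S) (b : Set S) : Prop :=
  ∃ σ, M.WinningFromSupport REACH AVOID σ b

end POMDP

section Aux

variable {S Act Ω : Type}

lemma reachN_le_one (M : POMDP S Act Ω) (σ : POMDP.Policy Act Ω) (T : Set S) :
    ∀ (n : ℕ) (h : List (Ω × Act)) (s : S), M.reachN σ T n h s ≤ 1 := by
  intro n
  induction n with
  | zero => intro h s; unfold POMDP.reachN; split <;> simp
  | succ n ih =>
    intro h s
    unfold POMDP.reachN
    split
    · exact le_rfl
    · calc ∑' α : Act, σ h (M.obs s) α *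
            ∑' s' : S, M.P s α s' * M.reachN σ T n (h ++ [(M.obs s, α)]) s'
          ≤ ∑' α : Act, σ h (M.obs s) α * 1 := by
            refine ENNReal.tsum_le_tsum fun α => mul_le_mul_right ?_ _
            calc ∑' s' : S, M.P s α s' * M.reachN σ T n (h ++ [(M.obs s, α)]) s'
                ≤ ∑' s' : S, M.P s α s' * 1 :=
                  ENNReal.tsum_le_tsum fun s' => mul_le_mul_right (ih _ _) _
              _ = 1 := by simp [(M.P s α).tsum_coe]
        _ = 1 := by simp [(σ h (M.obs s)).tsum_coe]

lemma reachN_mono (M : POMDP S Act Ω) (σ : POMDP.Policy Act Ω) (T : Set S) :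
    ∀ (n : ℕ) (h : List (Ω × Act)) (s : S),
      M.reachN σ T n h s ≤ M.reachN σ T (n + 1) h s := by
  intro n
  induction n with
  | zero =>
    intro h s
    unfold POMDP.reachN
    split
    · exact le_rfl
    · exact zero_le
  | succ n ih =>
    intro h s
    conv_lhs => unfold POMDP.reachN
    conv_rhs => unfold POMDP.reachN
    split
    · exact le_rfl
    · refine ENNReal.tsum_le_tsum fun α => mul_le_mul_right ?_ _
      exact ENNReal.tsum_le_tsum fun s' => mul_le_mul_right (ih _ _) _

end Aux

/-- If a belief support `b` is winning, every nonempty subset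
`b' ⊆ b` is also winning. -/
theorem winning_support_subset {S Act Ω : Type} [Fintype S] [Fintype Act]
    (M : POMDP S Act Ω) (REACH AVOID : Set S)
    (hdisj : Disjoint REACH AVOID)
    (hR : M.Absorbing REACH) (hA : M.Absorbing AVOID)
    (b b' : Set S) (hb : M.IsBeliefSupport b)
    (hsub : b' ⊆ b) (hne : b'.Nonempty)
    (hwin : M.WinningSupport REACH AVOID b) :
    M.WinningSupport REACH AVOID b' := by
  obtain ⟨σ, hσ⟩ := hwin
  refine ⟨σ, fun β' hβ' => ?_⟩
  -- uniform belief on b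
  have hbne : b.Nonempty := hb.1
  have hFne : b.toFinset.Nonempty := by
    rwa [Set.toFinset_nonempty]
  set u : PMF S := PMF.uniformOfFinset b.toFinset hFne with hu
  have hsum1 : ∀ p : PMF S, ∑ s : S, p s = 1 := fun p => by
    rw [← tsum_fintype (L := SummationFilter.unconditional S)]; exact p.tsum_coe
  -- the mixture
  set f : S → ℝ≥0∞ := fun s => 2⁻¹ * β' s + 2⁻¹ * u s with hf
  have hfsum : ∑ s : S, f s = 1 := by
    simp only [hf, Finset.sum_add_distrib, ← Finset.mul_sum, hsum1]
    simp [ENNReal.inv_two_add_inv_two]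
  set β : PMF S := PMF.ofFintype f hfsum with hβdef
  have hβapp : ∀ s, β s = 2⁻¹ * β' s + 2⁻¹ * u s := fun s => by
    rw [hβdef, PMF.ofFintype_apply]
  have husupp : u.support = b := by
    rw [hu, PMF.support_uniformOfFinset, Set.coe_toFinset]
  have hβsupp : β.support = b := by
    ext s
    simp only [PMF.mem_support_iff, hβapp, ne_eq, add_eq_zero, mul_eq_zero,
      ENNReal.inv_eq_zero, ENNReal.ofNat_ne_top, false_or, not_and_or]
    constructor
    · rintro (h | h)
      · exact hsub (hβ' ▸ (h : s ∈ β'.support))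
      · exact husupp ▸ (h : s ∈ u.support)
    · intro h
      right
      exact (husupp.symm ▸ h : s ∈ u.support)
  have hwinβ := hσ β hβsupp
  -- mixture identity for sums
  have hmix : ∀ r : S → ℝ≥0∞,
      ∑' s : S, β s * r s = 2⁻¹ * ∑' s : S, β' s * r s + 2⁻¹ * ∑' s : S, u s * r s := by
    intro r
    rw [tsum_fintype, tsum_fintype, tsum_fintype, Finset.mul_sum, Finset.mul_sum,
      ← Finset.sum_add_distrib]
    refine Finset.sum_congr rfl fun s _ => ?_
    rw [hβapp, add_mul, mul_assoc, mul_assoc]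
  constructor
  · -- AVOID probability 0
    have h0 : M.prReach σ AVOID β = 0 := hwinβ.1
    rw [POMDP.prReach] at h0
    have h0n : ∀ n : ℕ, ∑' s : S, β s * M.reachN σ AVOID n [] s = 0 :=
      fun n => le_antisymm (h0 ▸ le_iSup (fun n => ∑' s : S, β s * M.reachN σ AVOID n [] s) n)
        (zero_le)
    rw [POMDP.prReach]
    refine le_antisymm (iSup_le fun n => ?_) (zero_le)
    have hle : ∑' s : S, β' s * M.reachN σ AVOID n [] s
        ≤ 2 * ∑' s : S, β s * M.reachN σ AVOID n [] s := by
      rw [← ENNReal.tsum_mul_left]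
      refine ENNReal.tsum_le_tsum fun s => ?_
      rw [← mul_assoc]
      refine mul_le_mul_left ?_ _
      rw [hβapp, mul_add, ← mul_assoc, ← mul_assoc]
      rw [ENNReal.mul_inv_cancel (by norm_num) (by norm_num), one_mul]
      exact le_add_right le_rfl
    rw [h0n n, mul_zero] at hle
    exact hle
  · -- REACH probability 1
    have h1 : M.prReach σ REACH β = 1 := hwinβ.2
    have key : M.prReach σ REACH β
        = 2⁻¹ * M.prReach σ REACH β' + 2⁻¹ * M.prReach σ REACH u := by
      rw [POMDP.prReach, POMDP.prReach, POMDP.prReach]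
      have : ∀ n : ℕ, ∑' s : S, β s * M.reachN σ REACH n [] s
          = 2⁻¹ * ∑' s : S, β' s * M.reachN σ REACH n [] s
            + 2⁻¹ * ∑' s : S, u s * M.reachN σ REACH n [] s := fun n => hmix _
      simp only [this]
      have hmono : ∀ p : PMF S,
          Monotone fun n => 2⁻¹ * ∑' s : S, p s * M.reachN σ REACH n [] s := by
        intro p
        refine monotone_nat_of_le_succ fun n => ?_
        exact mul_le_mul_right (ENNReal.tsum_le_tsum fun s =>
          mul_le_mul_right (reachN_mono M σ REACH n [] s) _) _
      rw [ENNReal.mul_iSup, ENNReal.mul_iSup]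
      exact (ENNReal.iSup_add_iSup_of_monotone (hmono β') (hmono u)).symm
    have hle1 : ∀ p : PMF S, M.prReach σ REACH p ≤ 1 := by
      intro p
      rw [POMDP.prReach]
      refine iSup_le fun n => ?_
      calc ∑' s : S, p s * M.reachN σ REACH n [] s
          ≤ ∑' s : S, p s * 1 :=
            ENNReal.tsum_le_tsum fun s => mul_le_mul_right (reachN_le_one M σ REACH n [] s) _
        _ = 1 := by simp [p.tsum_coe, hsum1]
    by_contra hne1
    have hlt : M.prReach σ REACH β' < 1 := lt_of_le_of_ne (hle1 β') hne1
    have : M.prReach σ REACH β < 1 := by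
      rw [key]
      calc 2⁻¹ * M.prReach σ REACH β' + 2⁻¹ * M.prReach σ REACH u
          < 2⁻¹ * 1 + 2⁻¹ * 1 := by
            refine ENNReal.add_lt_add_of_lt_of_le ?_ ?_ ?_
            · exact (ENNReal.mul_lt_top (by norm_num) (lt_of_le_of_lt (hle1 u) (by norm_num))).ne
            · exact (ENNReal.mul_lt_mul_iff_right (by norm_num) (by norm_num)).mpr hlt
            · exact mul_le_mul_right (hle1 u) _
        _ = 1 := by rw [mul_one, ENNReal.inv_two_add_inv_two]
    rw [h1] at this
    exact lt_irrefl _ this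
end

section
/- In a finite MDP, if from state s every state reachable under some fixed policy avoids AVOID and has a path of length ≤ |S| to REACH staying within the reached set, and the policy's reached set is finite and closed, then the policy reaches REACH almost surely; conversely, boundedness of the rank by |S| is without loss of generality: if a ranking function with arbitrary real values exists on the reached set, then one with values in {0,…,|S|} exists. -/
open scoped ENNReal Classical

/-- Probability that the Markov chain induced by a memoryless policy `σ` on an
MDP with transitions `P` reaches `T` within `n` steps from `s`. -/
noncomputable def mcReachN {S : Type} (K : S → PMF S) (T : Set S) :
    ℕ → S → ℝ≥0∞
  | 0, s => if s ∈ T then 1 else 0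
  | n + 1, s => if s ∈ T then 1 else ∑' t : S, K s t * mcReachN K T n t

/-- Probability of eventually reaching `T` from `s`. -/
noncomputable def mcReach {S : Type} (K : S → PMF S) (T : Set S) (s : S) : ℝ≥0∞ :=
  ⨆ n, mcReachN K T n s

section Aux
variable {S : Type} (K : S → PMF S) (T : Set S)


lemma mcReachN_le_one : ∀ n s, mcReachN K T n s ≤ 1 := by
  intro n
  induction n with
  | zero => intro s; simp only [mcReachN]; split <;> simp
  | succ n ih =>
    intro s; simp only [mcReachN]; split
    · exact le_rfl
    · calc ∑' t, K s t * mcReachN K T n t ≤ ∑' t, K s t * 1 :=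
            ENNReal.tsum_le_tsum fun t => mul_le_mul_right (ih t) _
        _ = 1 := by simp [(K s).tsum_coe]

lemma mcReachN_mem (n : ℕ) (s : S) (h : s ∈ T) : mcReachN K T n s = 1 := by
  cases n <;> simp [mcReachN, h]

lemma mcReachN_mono (n : ℕ) : ∀ s, mcReachN K T n s ≤ mcReachN K T (n + 1) s := by
  induction n with
  | zero =>
    intro s
    by_cases h : s ∈ T <;> simp [mcReachN, h]
  | succ n ih =>
    intro s
    by_cases h : s ∈ T
    · simp [mcReachN, h]
    · simp only [mcReachN, if_neg h]
      exact ENNReal.tsum_le_tsum fun t => mul_le_mul_right (ih t) _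

lemma mcReachN_mono' {m n : ℕ} (h : m ≤ n) (s : S) :
    mcReachN K T m s ≤ mcReachN K T n s := by
  induction n with
  | zero => simp_all
  | succ n ih =>
    rcases Nat.lt_or_ge m (n+1) with h' | h'
    · exact (ih (Nat.lt_succ_iff.mp h')).trans (mcReachN_mono K T n s)
    · have : m = n + 1 := le_antisymm h h'
      subst this; exact le_rfl

lemma mcReachN_pos : ∀ (n : ℕ) (s : S) (p : ℕ → S), p 0 = s → p n ∈ T →
    (∀ i < n, K (p i) (p (i + 1)) ≠ 0) → mcReachN K T n s ≠ 0 := by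
  intro n
  induction n with
  | zero =>
    intro s p h0 hT _
    rw [h0] at hT; simp [mcReachN, hT]
  | succ n ih =>
    intro s p h0 hT hedge
    by_cases h : s ∈ T
    · simp [mcReachN, h]
    · simp only [mcReachN, if_neg h]
      have h1 : mcReachN K T n (p 1) ≠ 0 :=
        ih (p 1) (fun i => p (i + 1)) rfl hT (fun i hi => hedge (i+1) (by omega))
      have h2 : K s (p 1) ≠ 0 := by rw [← h0]; exact hedge 0 (by omega)
      have := ENNReal.le_tsum (f := fun t => K s t * mcReachN K T n t) (p 1)
      intro hz
      rw [hz] at this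
      exact (mul_ne_zero h2 h1) (le_antisymm (le_of_le_of_eq this rfl) (zero_le)) |>.elim

lemma step_sub (m : ℕ) (s : S) (hs : s ∉ T) :
    1 - mcReachN K T (m + 1) s ≤ ∑' t, K s t * (1 - mcReachN K T m t) := by
  have h1 : (1 : ℝ≥0∞) = ∑' t, K s t := (K s).tsum_coe.symm
  simp only [mcReachN, if_neg hs]
  nth_rewrite 1 [h1]
  calc (∑' t, (K s t : ℝ≥0∞)) - ∑' t, K s t * mcReachN K T m t
      ≤ ∑' t, ((K s t : ℝ≥0∞) - K s t * mcReachN K T m t) := by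
        refine tsub_le_iff_right.mpr ?_
        rw [← ENNReal.tsum_add]
        exact ENNReal.tsum_le_tsum fun t => le_tsub_add
    _ ≤ ∑' t, K s t * (1 - mcReachN K T m t) := by
        refine ENNReal.tsum_le_tsum fun t => ?_
        refine tsub_le_iff_right.mpr ?_
        have hc : (1 - mcReachN K T m t) + mcReachN K T m t = 1 :=
          tsub_add_cancel_of_le (mcReachN_le_one K T m t)
        rw [← mul_add, hc, mul_one]

lemma step_sub' (m : ℕ) (s : S) (hs : s ∉ T) :
    ∑' t, K s t * (1 - mcReachN K T m t) ≤ 1 - mcReachN K T (m + 1) s := by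
  simp only [mcReachN, if_neg hs]
  have hfin : ∑' t, K s t * mcReachN K T m t ≠ ⊤ := by
    refine ne_top_of_le_ne_top ENNReal.one_ne_top ?_
    calc ∑' t, K s t * mcReachN K T m t ≤ ∑' t, K s t * 1 :=
          ENNReal.tsum_le_tsum fun t => mul_le_mul_right (mcReachN_le_one K T m t) _
      _ = 1 := by simp [(K s).tsum_coe]
  refine ENNReal.le_sub_of_add_le_right hfin ?_
  rw [← ENNReal.tsum_add]
  calc ∑' t, (K s t * (1 - mcReachN K T m t) + K s t * mcReachN K T m t)
      = ∑' t, (K s t : ℝ≥0∞) := by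
        congr 1; funext t
        rw [← mul_add, tsub_add_cancel_of_le (mcReachN_le_one K T m t), mul_one]
    _ = 1 := (K s).tsum_coe
    _ ≤ 1 := le_rfl

theorem as_reach [Fintype S] (C : Set S)
    (hclosed : ∀ s ∈ C, ∀ t, K s t ≠ 0 → t ∈ C)
    (hpath : ∀ s ∈ C, ∃ n ≤ Fintype.card S, ∃ p : ℕ → S, p 0 = s ∧ p n ∈ T ∧
        ∀ i < n, K (p i) (p (i + 1)) ≠ 0) :
    ∀ s ∈ C, mcReach K T s = 1 := by
  set N := Fintype.card S with hNdef
  have hN : ∀ s ∈ C, mcReachN K T N s ≠ 0 := by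
    intro s hs
    obtain ⟨n, hn, p, h0, hT, he⟩ := hpath s hs
    have := mcReachN_pos K T n s p h0 hT he
    intro hz
    exact this (le_antisymm (hz ▸ mcReachN_mono' K T hn s) (zero_le))
  set B : ℝ≥0∞ := Finset.univ.sup (fun t => if t ∈ C then 1 - mcReachN K T N t else 0)
    with hBdef
  have hB1 : B < 1 := by
    refine Finset.sup_lt_iff (by norm_num) |>.mpr fun t _ => ?_
    split
    · exact ENNReal.sub_lt_self ENNReal.one_ne_top one_ne_zero (hN t (by assumption))
    · norm_num
  have hBle : ∀ t ∈ C, 1 - mcReachN K T N t ≤ B := fun t ht => by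
    have := Finset.le_sup (f := fun t => if t ∈ C then 1 - mcReachN K T N t else 0)
      (Finset.mem_univ t)
    simpa [ht] using this
  have lemA : ∀ m, ∀ s ∈ C, 1 - mcReachN K T (m + N) s ≤ (1 - mcReachN K T m s) * B := by
    intro m
    induction m with
    | zero =>
      intro s hs
      by_cases h : s ∈ T
      · simp [mcReachN_mem K T _ s h]
      · have : mcReachN K T 0 s = 0 := by simp [mcReachN, h]
        rw [zero_add, this, tsub_zero, one_mul]
        exact hBle s hs
    | succ m ih =>
      intro s hs
      by_cases h : s ∈ T
      · simp [mcReachN_mem K T _ s h]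
      · have h1 : m + 1 + N = (m + N) + 1 := by ring
        rw [h1]
        calc 1 - mcReachN K T ((m + N) + 1) s
            ≤ ∑' t, K s t * (1 - mcReachN K T (m + N) t) := step_sub K T _ s h
          _ ≤ ∑' t, K s t * ((1 - mcReachN K T m t) * B) := by
              refine ENNReal.tsum_le_tsum fun t => ?_
              by_cases hKt : K s t = 0
              · simp [hKt]
              · exact mul_le_mul_right (ih t (hclosed s hs t hKt)) _
          _ = (∑' t, K s t * (1 - mcReachN K T m t)) * B := by
              rw [← ENNReal.tsum_mul_right]; simp_rw [mul_assoc]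
          _ ≤ (1 - mcReachN K T (m + 1) s) * B :=
              mul_le_mul_left (step_sub' K T m s h) _
  have lemB : ∀ k, ∀ s ∈ C, 1 - mcReachN K T (k * N) s ≤ B ^ k := by
    intro k
    induction k with
    | zero => intro s _; simpa using tsub_le_self
    | succ k ih =>
      intro s hs
      have h1 : (k + 1) * N = k * N + N := by ring
      rw [h1, pow_succ]
      exact (lemA (k * N) s hs).trans (mul_le_mul_left (ih s hs) B)
  intro s hs
  refine le_antisymm (by rw [mcReach]; exact iSup_le fun n => mcReachN_le_one K T n s) ?_
  have key : ∀ k, 1 - B ^ k ≤ mcReach K T s := by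
    intro k
    have h2 : 1 - (1 - mcReachN K T (k * N) s) = mcReachN K T (k * N) s :=
      ENNReal.sub_sub_cancel ENNReal.one_ne_top (mcReachN_le_one K T _ s)
    calc 1 - B ^ k ≤ 1 - (1 - mcReachN K T (k * N) s) :=
          tsub_le_tsub_left (lemB k s hs) 1
      _ = mcReachN K T (k * N) s := h2
      _ ≤ mcReach K T s := by
          rw [mcReach]; exact le_iSup (fun n => mcReachN K T n s) (k * N)
  have hten : Filter.Tendsto (fun k => 1 - B ^ k) Filter.atTop (nhds 1) := by
    have h0 : Filter.Tendsto (fun k => B ^ k) Filter.atTop (nhds 0) :=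
      ENNReal.tendsto_pow_atTop_nhds_zero_of_lt_one hB1
    have := (ENNReal.continuous_sub_left ENNReal.one_ne_top).continuousAt (x := (0:ℝ≥0∞))
    have h2 := this.tendsto.comp h0
    simpa [Function.comp_def] using h2
  exact le_of_tendsto hten (Filter.Eventually.of_forall key)

lemma ranking_path [Fintype S] (C T : Set S)
    (hclosed : ∀ s ∈ C, ∀ t, K s t ≠ 0 → t ∈ C) (r : S → ℝ)
    (hr : ∀ s ∈ C, s ∉ T → ∃ s', K s s' ≠ 0 ∧ r s > r s') :
    ∀ s ∈ C, ∃ n ≤ Fintype.card S, ∃ p : ℕ → S, p 0 = s ∧ p n ∈ T ∧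
      ∀ i < n, K (p i) (p (i + 1)) ≠ 0 := by
  set m : S → ℕ := fun s => (Finset.univ.filter (fun u => r u < r s)).card with hm
  have hmle : ∀ s, m s ≤ Fintype.card S := fun s =>
    Finset.card_filter_le _ _
  have hmlt : ∀ s s', r s' < r s → m s' < m s := by
    intro s s' h
    refine Finset.card_lt_card ?_
    constructor
    · intro u hu
      simp only [Finset.mem_filter, Finset.mem_univ, true_and] at hu ⊢
      exact hu.trans h
    · intro hsub
      have : s' ∈ Finset.univ.filter (fun u => r u < r s) := by
        simp [h]
      have := hsub this
      simp at this
  have key : ∀ k, ∀ s ∈ C, m s ≤ k → ∃ n ≤ m s, ∃ p : ℕ → S, p 0 = s ∧ p n ∈ T ∧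
      ∀ i < n, K (p i) (p (i + 1)) ≠ 0 := by
    intro k
    induction k with
    | zero =>
      intro s hs hsk
      by_cases hT : s ∈ T
      · exact ⟨0, Nat.zero_le _, fun _ => s, rfl, hT, by omega⟩
      · obtain ⟨s', hK, hlt⟩ := hr s hs hT
        exact absurd (hmlt s s' hlt) (by omega)
    | succ k ih =>
      intro s hs hsk
      by_cases hT : s ∈ T
      · exact ⟨0, Nat.zero_le _, fun _ => s, rfl, hT, by omega⟩
      · obtain ⟨s', hK, hlt⟩ := hr s hs hT
        have hs' : s' ∈ C := hclosed s hs s' hK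
        have hlt' := hmlt s s' hlt
        obtain ⟨n', hn', p', h0', hT', he'⟩ := ih s' hs' (by omega)
        refine ⟨n' + 1, by omega, fun i => if i = 0 then s else p' (i - 1), by simp, ?_, ?_⟩
        · simpa using hT'
        · intro i hi
          match i with
          | 0 => simpa [h0'] using hK
          | j + 1 => simpa using he' j (by omega)
  intro s hs
  obtain ⟨n, hn, hp⟩ := key (m s) s hs le_rfl
  exact ⟨n, hn.trans (hmle s), hp⟩

lemma nat_ranking [Fintype S] (C T : Set S)
    (hpath : ∀ s ∈ C, ∃ n ≤ Fintype.card S, ∃ p : ℕ → S, p 0 = s ∧ p n ∈ T ∧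
      ∀ i < n, K (p i) (p (i + 1)) ≠ 0) :
    ∃ r : S → ℕ, (∀ s ∈ C, r s ≤ Fintype.card S) ∧ ∀ s ∈ C, s ∉ T →
      ∃ s', K s s' ≠ 0 ∧ r s > r s' := by
  set Q : S → ℕ → Prop := fun s n => n ≤ Fintype.card S ∧ ∃ p : ℕ → S, p 0 = s ∧ p n ∈ T ∧
      ∀ i < n, K (p i) (p (i + 1)) ≠ 0 with hQdef
  refine ⟨fun s => if h : ∃ n, Q s n then Nat.find h else 0, ?_, ?_⟩
  · intro s _
    by_cases h : ∃ n, Q s n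
    · simp only [dif_pos h]
      exact (Nat.find_spec h).1
    · simp [dif_neg h]
  · intro s hs hT
    have h : ∃ n, Q s n := by
      obtain ⟨n, hn, p, hp⟩ := hpath s hs
      exact ⟨n, hn, p, hp⟩
    obtain ⟨hle, p, h0, hTn, he⟩ := Nat.find_spec h
    have hn0 : Nat.find h ≠ 0 := by
      intro h0'
      rw [h0'] at hTn
      rw [h0] at hTn
      exact hT hTn
    refine ⟨p 1, by simpa [h0] using he 0 (by omega), ?_⟩
    have hQ1 : Q (p 1) (Nat.find h - 1) := by
      refine ⟨by omega, fun i => p (i + 1), rfl, ?_, ?_⟩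
      · show p (Nat.find h - 1 + 1) ∈ T
        have heq : Nat.find h - 1 + 1 = Nat.find h := by omega
        rw [heq]; exact hTn
      · intro i hi
        exact he (i + 1) (by omega)
    have h' : ∃ k, Q (p 1) k := ⟨Nat.find h - 1, hQ1⟩
    have hfind : Nat.find h' ≤ Nat.find h - 1 := Nat.find_le hQ1
    simp only [dif_pos h, dif_pos h']
    omega

end Aux

/-- In a finite MDP with memoryless policy `σ` and reached set `C`
(closed under successors and disjoint from AVOID):
(a) if every state of `C` has a path of length at most `|S|` within `C` to
REACH, then REACH is reached almost surely from every state of `C`; and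
(b) the bound `|S|` on ranks is without loss of generality: a real-valued
ranking function on `C` exists iff one with values in `{0, …, |S|}` exists. -/
theorem bounded_ranking_wlog {S Act : Type} [Fintype S] [Fintype Act]
    (P : S → Act → PMF S) (REACH AVOID : Set S)
    (hdisj : Disjoint REACH AVOID)
    (hR : ∀ s ∈ REACH, ∀ α, P s α = PMF.pure s)
    (hA : ∀ s ∈ AVOID, ∀ α, P s α = PMF.pure s)
    (σ : S → Act) (C : Set S)
    (havoid : C ∩ AVOID = ∅)
    (hclosed : ∀ s ∈ C, ∀ s', P s (σ s) s' ≠ 0 → s' ∈ C) :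
    -- (a) bounded paths to REACH within C imply almost-sure reachability
    ((∀ s ∈ C, ∃ n ≤ Fintype.card S, ∃ p : ℕ → S, p 0 = s ∧ p n ∈ REACH ∧
        ∀ i < n, p i ∈ C ∧ P (p i) (σ (p i)) (p (i + 1)) ≠ 0) →
      ∀ s ∈ C, mcReach (fun t => P t (σ t)) REACH s = 1) ∧
    -- (b) real-valued rankings can be replaced by rankings bounded by |S|
    ((∃ r : S → ℝ, ∀ s ∈ C, s ∉ REACH →
        ∃ s', P s (σ s) s' ≠ 0 ∧ r s > r s') ↔
      (∃ r : S → ℕ, (∀ s ∈ C, r s ≤ Fintype.card S) ∧ ∀ s ∈ C, s ∉ REACH →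
        ∃ s', P s (σ s) s' ≠ 0 ∧ r s > r s')) := by
  set K := fun t => P t (σ t) with hK
  constructor
  · intro hpath s hs
    refine as_reach K REACH C hclosed (fun s hs => ?_) s hs
    obtain ⟨n, hn, p, h0, hT, he⟩ := hpath s hs
    exact ⟨n, hn, p, h0, hT, fun i hi => (he i hi).2⟩
  · constructor
    · rintro ⟨r, hr⟩
      exact nat_ranking K C REACH (ranking_path K C REACH hclosed r hr)
    · rintro ⟨r, _, hr⟩
      refine ⟨fun s => (r s : ℝ), fun s hs hT => ?_⟩
      obtain ⟨s', h1, h2⟩ := hr s hs hT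
      exact ⟨s', h1, Nat.cast_lt.mpr h2⟩
end
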